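/- arXiv:2402.08913 — 2 statements merged into one kernel-verified Lean document; each statement's English description precedes it below -/
import Mathlib

section
/- Let $\tilde b \in \mathbb{R}^n$ satisfy the Diophantine condition with constant $c$ and exponent $r$, and suppose $(U_0, B_0) \in H^s(\mathbb{T}^n)$, $s \ge 0$, with $\int U_0 = \int B_0 = 0$. Let $(U,B)$ solve the linearized system $\partial_t U = \tilde b \cdot \nabla B$, $\partial_t B - \Delta B = \tilde b \cdot \nabla U$ on $\mathbb{T}^n$ with divergence-free initial data. Then for all $t \ge 0$, $\|U(t)\|_{L^2} + \|B(t)\|_{L^2} \le C(1+t)^{-\frac{s}{2(1+r)}}(\|U_0\|_{H^s} + \|B_0\|_{H^s})$. -/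
open Complex

lemma poly_key (a m T eu eb w : ℝ) (hm : 1 ≤ m) (hT : 1 ≤ T) (ha : a^2 ≤ T*m)
    (heu : 0 ≤ eu) (heb : 0 ≤ eb) (hw : w^2 ≤ eu*eb) :
    -2*a^2*m*T*eu + (4*a^2*m*T - 6*m^3*T^2)*eb + a*(3*m^2*T - a^2)*w ≤ 0 := by
  have hm0 : (0:ℝ) < m := by linarith
  have hT0 : (0:ℝ) < T := by linarith
  have habs : 2*m*|a*w| ≤ a^2*eu + m^2*eb := by
    have h1 : (2*m*|a*w|)^2 ≤ (a^2*eu + m^2*eb)^2 := by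
      have : (a*w)^2 ≤ a^2*(eu*eb) := by nlinarith [sq_nonneg a]
      nlinarith [sq_nonneg (a^2*eu - m^2*eb), _root_.sq_abs (a*w)]
    have h2 : (0:ℝ) ≤ a^2*eu + m^2*eb := by positivity
    have := Real.sqrt_le_sqrt h1
    rwa [Real.sqrt_sq (by positivity), Real.sqrt_sq h2] at this
  have hco : 0 ≤ 3*m^2*T - a^2 := by nlinarith
  have h5 : a*(3*m^2*T - a^2)*w ≤ (3*m*T/2) * (a^2*eu + m^2*eb) := by
    have l1 : a*(3*m^2*T - a^2)*w ≤ (3*m^2*T - a^2) * |a*w| := by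
      have := le_abs_self (a*w)
      nlinarith [abs_nonneg (a*w)]
    have l2 : (3*m^2*T - a^2) * |a*w| ≤ 3*m^2*T * |a*w| :=
      mul_le_mul_of_nonneg_right (by nlinarith [sq_nonneg a]) (abs_nonneg _)
    have l3 : 3*m^2*T * |a*w| = (3*m*T/2) * (2*m*|a*w|) := by ring
    have l4 : (3*m*T/2) * (2*m*|a*w|) ≤ (3*m*T/2) * (a^2*eu + m^2*eb) :=
      mul_le_mul_of_nonneg_left habs (by positivity)
    linarith
  have hebco : (4*a^2*m*T - 6*m^3*T^2 + (3/2)*m^3*T) * eb ≤ 0 := by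
    have c1 : 4*a^2*m*T ≤ 4*m^2*T^2 := by nlinarith
    have hm23 : m^2 ≤ m^3 := by nlinarith
    have hT2 : T ≤ T^2 := by nlinarith
    have c2 : 4*m^2*T^2 ≤ 4*m^3*T^2 := by nlinarith [sq_nonneg T]
    have c3 : (3/2)*m^3*T ≤ (3/2)*m^3*T^2 := by nlinarith [pow_pos hm0 3]
    have hneg : 4*a^2*m*T - 6*m^3*T^2 + (3/2)*m^3*T ≤ -(1/2)*m^3*T^2 := by linarith
    have := mul_nonpos_of_nonpos_of_nonneg (le_trans hneg (by nlinarith [pow_pos hm0 3, sq_nonneg T] : -(1/2)*m^3*T^2 ≤ 0)) heb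
    linarith
  have h0 : 0 ≤ a^2*m*T*eu := by positivity
  linarith [h5, hebco, h0]


lemma mode_decay {E : Type*} [NormedAddCommGroup E] [InnerProductSpace ℂ E]
    (a m T : ℝ) (hm : 1 ≤ m) (hT : 1 ≤ T) (ha : a^2 ≤ T*m)
    (u b : ℝ → E)
    (hu : ∀ t, HasDerivAt u ((Complex.I * (a:ℂ)) • b t) t)
    (hb : ∀ t, HasDerivAt b ((Complex.I * (a:ℂ)) • u t - ((m:ℝ):ℂ) • b t) t)
    {t : ℝ} (ht : 0 ≤ t) :
    ‖u t‖^2 + ‖b t‖^2 ≤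
      3 * Real.exp (-(a^2/(3*m*T)) * t) * (‖u 0‖^2 + ‖b 0‖^2) := by
  have hm0 : (0:ℝ) < m := by linarith
  have hT0 : (0:ℝ) < T := by linarith
  set γ : ℝ := a^2/(3*m*T) with hγ
  set eu : ℝ → ℝ := fun τ => ‖u τ‖^2 with heu_def
  set eb : ℝ → ℝ := fun τ => ‖b τ‖^2 with heb_def
  set w : ℝ → ℝ := fun τ => (inner ℂ (u τ) (b τ) : ℂ).im with hw_def
  -- derivative of z
  have hz : ∀ τ, HasDerivAt (fun s => (inner ℂ (u s) (b s) : ℂ))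
      (Complex.I * a * ((eu τ : ℝ):ℂ) - Complex.I * a * ((eb τ : ℝ):ℂ)
        - (m:ℂ) * (inner ℂ (u τ) (b τ) : ℂ)) τ := by
    intro τ
    have h := (hu τ).inner ℂ (hb τ)
    refine h.congr_deriv ?_
    symm
    rw [inner_sub_right, inner_smul_right, inner_smul_left, inner_smul_right,
      inner_self_eq_norm_sq_to_K, inner_self_eq_norm_sq_to_K]
    simp [heu_def, heb_def]
    ring
  have hw : ∀ τ, HasDerivAt w (a * eu τ - a * eb τ - m * w τ) τ := by
    intro τ
    have h2 := Complex.imCLM.hasFDerivAt.comp_hasDerivAt τ (hz τ)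
    simp only [Complex.imCLM_apply] at h2
    refine h2.congr_deriv ?_
    symm
    simp [hw_def]
  have heu : ∀ τ, HasDerivAt eu (-(2*a) * w τ) τ := by
    intro τ
    have h := (hu τ).inner ℂ (hu τ)
    have h2 := Complex.reCLM.hasFDerivAt.comp_hasDerivAt τ h
    simp only [Function.comp_def, Complex.reCLM_apply] at h2
    have hfun : (fun s => (inner ℂ (u s) (u s) : ℂ).re) = eu := by
      funext x
      show (inner ℂ (u x) (u x) : ℂ).re = ‖u x‖^2
      rw [← inner_self_eq_norm_sq (𝕜 := ℂ), RCLike.re_to_complex]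
    rw [hfun] at h2
    refine h2.congr_deriv ?_
    symm
    rw [inner_smul_right, inner_smul_left,
      show (inner ℂ (b τ) (u τ) : ℂ) = starRingEnd ℂ (inner ℂ (u τ) (b τ)) from (inner_conj_symm _ _).symm]
    have him : (inner ℂ (b τ) (u τ) : ℂ).im = -(inner ℂ (u τ) (b τ) : ℂ).im := by
      rw [show (inner ℂ (b τ) (u τ) : ℂ) = starRingEnd ℂ (inner ℂ (u τ) (b τ)) from
        (inner_conj_symm _ _).symm, Complex.conj_im]
    simp [hw_def, Complex.mul_re, Complex.conj_im, Complex.conj_re]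
    rw [him]; ring
  have heb : ∀ τ, HasDerivAt eb (2*a*w τ - 2*m*eb τ) τ := by
    intro τ
    have h := (hb τ).inner ℂ (hb τ)
    have h2 := Complex.reCLM.hasFDerivAt.comp_hasDerivAt τ h
    simp only [Function.comp_def, Complex.reCLM_apply] at h2
    have hfun : (fun s => (inner ℂ (b s) (b s) : ℂ).re) = eb := by
      funext x
      show (inner ℂ (b x) (b x) : ℂ).re = ‖b x‖^2
      rw [← inner_self_eq_norm_sq (𝕜 := ℂ), RCLike.re_to_complex]
    rw [hfun] at h2
    refine h2.congr_deriv ?_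
    symm
    rw [inner_sub_right, inner_sub_left, inner_smul_right, inner_smul_left,
      inner_smul_left, inner_smul_right,
      show (inner ℂ (b τ) (u τ) : ℂ) = starRingEnd ℂ (inner ℂ (u τ) (b τ)) from (inner_conj_symm _ _).symm,
      inner_self_eq_norm_sq_to_K]
    have him : (inner ℂ (b τ) (u τ) : ℂ).im = -(inner ℂ (u τ) (b τ) : ℂ).im := by
      rw [show (inner ℂ (b τ) (u τ) : ℂ) = starRingEnd ℂ (inner ℂ (u τ) (b τ)) from
        (inner_conj_symm _ _).symm, Complex.conj_im]
    simp [hw_def, heb_def, Complex.mul_re, Complex.conj_im, Complex.conj_re, ← Complex.ofReal_pow]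
    rw [him]; ring
  have heu_nn : ∀ τ, 0 ≤ eu τ := fun τ => by simp only [heu_def]; positivity
  have heb_nn : ∀ τ, 0 ≤ eb τ := fun τ => by simp only [heb_def]; positivity
  have hw_sq : ∀ τ, (w τ)^2 ≤ eu τ * eb τ := by
    intro τ
    have h1 : |(inner ℂ (u τ) (b τ) : ℂ).im| ≤ ‖(inner ℂ (u τ) (b τ) : ℂ)‖ := by
      exact Complex.abs_im_le_norm _
    have h2 : ‖(inner ℂ (u τ) (b τ) : ℂ)‖ ≤ ‖u τ‖ * ‖b τ‖ := norm_inner_le_norm _ _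
    have h3 : |w τ| ≤ ‖u τ‖ * ‖b τ‖ := le_trans h1 h2
    calc (w τ)^2 = |w τ|^2 := (_root_.sq_abs _).symm
      _ ≤ (‖u τ‖ * ‖b τ‖)^2 := by
          exact pow_le_pow_left₀ (abs_nonneg _) h3 2
      _ = eu τ * eb τ := by simp only [heu_def, heb_def]; ring
  set L : ℝ → ℝ := fun τ => eu τ + eb τ - (a/(T*m)) * w τ with hL_def
  have hL : ∀ τ, HasDerivAt L
      ((-(2*a) * w τ) + (2*a*w τ - 2*m*eb τ) - (a/(T*m)) * (a * eu τ - a * eb τ - m * w τ)) τ :=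
    fun τ => ((heu τ).add (heb τ)).sub ((hw τ).const_mul _)
  have hDL : ∀ τ, ((-(2*a) * w τ) + (2*a*w τ - 2*m*eb τ)
      - (a/(T*m)) * (a * eu τ - a * eb τ - m * w τ)) + γ * L τ ≤ 0 := by
    intro τ
    have key := poly_key a m T (eu τ) (eb τ) (w τ) hm hT ha (heu_nn τ) (heb_nn τ) (hw_sq τ)
    have heq : ((-(2*a) * w τ) + (2*a*w τ - 2*m*eb τ)
        - (a/(T*m)) * (a * eu τ - a * eb τ - m * w τ)) + γ * L τ
        = (-2*a^2*m*T*(eu τ) + (4*a^2*m*T - 6*m^3*T^2)*(eb τ)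
            + a*(3*m^2*T - a^2)*(w τ)) / (3*m^2*T^2) := by
      rw [hL_def, hγ]
      field_simp
      ring
    rw [heq]
    exact div_nonpos_of_nonpos_of_nonneg key (by positivity)
  set φ : ℝ → ℝ := fun τ => L τ * Real.exp (γ * τ) with hφ_def
  have hφ : ∀ τ, HasDerivAt φ ((((-(2*a) * w τ) + (2*a*w τ - 2*m*eb τ)
      - (a/(T*m)) * (a * eu τ - a * eb τ - m * w τ)) + γ * L τ) * Real.exp (γ * τ)) τ := by
    intro τ
    have he : HasDerivAt (fun s : ℝ => Real.exp (γ * s)) (Real.exp (γ*τ) * γ) τ := by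
      simpa using (((hasDerivAt_id τ).const_mul γ).exp)
    have := (hL τ).mul he
    refine this.congr_deriv ?_
    symm
    ring
  have hanti : Antitone φ :=
    antitone_of_deriv_nonpos (fun τ => (hφ τ).differentiableAt)
      (fun τ => by
        rw [(hφ τ).deriv]
        exact mul_nonpos_of_nonpos_of_nonneg (hDL τ) (Real.exp_nonneg _))
  have hLt : L t * Real.exp (γ * t) ≤ L 0 := by
    have h := hanti ht
    simpa [hφ_def] using h
  have hcomp : ∀ τ, |(a/(T*m)) * w τ| ≤ (eu τ + eb τ)/2 := by
    intro τ
    have hws := hw_sq τ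
    have hTm1 : 1 ≤ T*m := by nlinarith
    have h2 : (a * w τ)^2 ≤ (T*m) * (eu τ * eb τ) := by
      have l1 := mul_le_mul_of_nonneg_right ha (sq_nonneg (w τ))
      have l2 := mul_le_mul_of_nonneg_left hws (by positivity : (0:ℝ) ≤ T*m)
      nlinarith [l1, l2]
    have h3 : eu τ * eb τ ≤ ((eu τ + eb τ)/2)^2 := by nlinarith [sq_nonneg (eu τ - eb τ)]
    have h1 : ((a/(T*m)) * w τ)^2 ≤ ((eu τ + eb τ)/2)^2 := by
      have heq : ((a/(T*m)) * w τ)^2 = (a * w τ)^2/(T*m)^2 := by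
        field_simp
      rw [heq, div_le_iff₀ (by positivity)]
      calc (a*w τ)^2 ≤ (T*m)*(eu τ*eb τ) := h2
        _ ≤ (T*m)*(((eu τ + eb τ)/2)^2) := by
            exact mul_le_mul_of_nonneg_left h3 (by positivity)
        _ ≤ ((eu τ + eb τ)/2)^2 * (T*m)^2 := by
            have hnn : (0:ℝ) ≤ T*m*((eu τ + eb τ)/2)^2 := by positivity
            have := mul_le_mul_of_nonneg_left hTm1 hnn
            nlinarith [this]
    have hy : 0 ≤ (eu τ + eb τ)/2 := by
      have := heu_nn τ; have := heb_nn τ; linarith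
    have := Real.sqrt_le_sqrt h1
    rwa [Real.sqrt_sq_eq_abs, Real.sqrt_sq hy] at this
  have hE2L : eu t + eb t ≤ 2 * L t := by
    have h := (abs_le.mp (hcomp t)).2
    simp only [hL_def]
    linarith
  have hL0 : L 0 ≤ (3/2) * (eu 0 + eb 0) := by
    have h := (abs_le.mp (hcomp 0)).1
    simp only [hL_def]
    linarith
  have hεpos : (0:ℝ) < Real.exp (γ * t) := Real.exp_pos _
  have hLt' : L t ≤ L 0 * Real.exp (-(γ*t)) := by
    rw [Real.exp_neg, ← div_eq_mul_inv, le_div_iff₀ hεpos]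
    exact hLt
  show eu t + eb t ≤ 3 * Real.exp (-γ * t) * (eu 0 + eb 0)
  rw [neg_mul]
  have hmul := mul_le_mul_of_nonneg_right hL0 (Real.exp_nonneg (-(γ*t)))
  calc eu t + eb t ≤ 2 * L t := hE2L
    _ ≤ 2 * (L 0 * Real.exp (-(γ*t))) := by linarith
    _ ≤ 2 * (3/2 * (eu 0 + eb 0) * Real.exp (-(γ*t))) := by linarith
    _ = 3 * Real.exp (-(γ*t)) * (eu 0 + eb 0) := by ring


lemma pow_le_factorial_mul_exp (N : ℕ) {y : ℝ} (hy : 0 ≤ y) :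
    y^N ≤ N.factorial * Real.exp y := by
  have h := Real.sum_le_exp_of_nonneg hy (N+1)
  have h1 : y^N / N.factorial ≤ ∑ i ∈ Finset.range (N+1), y^i / i.factorial := by
    apply Finset.single_le_sum (f := fun i => y^i / (i.factorial:ℝ)) _
      (Finset.self_mem_range_succ N)
    intro i _
    positivity
  have hN : (0:ℝ) < N.factorial := by positivity
  calc y^N = (y^N / N.factorial) * N.factorial := by field_simp
    _ ≤ Real.exp y * N.factorial := mul_le_mul_of_nonneg_right (h1.trans h) hN.le
    _ = N.factorial * Real.exp y := by ring

lemma rpow_mul_exp_le (p cc : ℝ) (hp : 0 ≤ p) (hc : 0 < cc) :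
    ∃ C : ℝ, 1 ≤ C ∧ ∀ x : ℝ, 0 ≤ x → x ^ p * Real.exp (-(cc * x)) ≤ C := by
  set N := ⌈p⌉₊ with hN
  refine ⟨max 1 ((N.factorial + 1) / cc ^ p), le_max_left _ _, fun x hx => ?_⟩
  have hy : 0 ≤ cc * x := by positivity
  have hxp : x ^ p = (cc*x) ^ p / cc ^ p := by
    rw [Real.mul_rpow hc.le hx]
    field_simp [ne_of_gt (Real.rpow_pos_of_pos hc p)]
  have hyp : (cc*x) ^ p ≤ (N.factorial + 1) * Real.exp (cc*x) := by
    have hexp1 : (1:ℝ) ≤ Real.exp (cc*x) := Real.one_le_exp hy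
    rcases le_or_gt (cc*x) 1 with h1 | h1
    · have : (cc*x) ^ p ≤ 1 := Real.rpow_le_one hy h1 hp
      nlinarith [(by positivity : (0:ℝ) < (N.factorial:ℝ))]
    · have h2 : (cc*x) ^ p ≤ (cc*x) ^ (N:ℝ) :=
        Real.rpow_le_rpow_of_exponent_le h1.le (Nat.le_ceil p)
      rw [Real.rpow_natCast] at h2
      have h3 := pow_le_factorial_mul_exp N hy
      nlinarith [Real.exp_pos (cc*x)]
  have key : x ^ p * Real.exp (-(cc*x)) ≤ (N.factorial + 1) / cc ^ p := by
    rw [hxp, Real.exp_neg]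
    rw [div_mul_eq_mul_div, div_le_div_iff₀ (Real.rpow_pos_of_pos hc p) (Real.rpow_pos_of_pos hc p)]
    have h4 := mul_le_mul_of_nonneg_right hyp (inv_nonneg.mpr (Real.exp_pos (cc*x)).le)
    rw [mul_assoc, mul_inv_cancel₀ (ne_of_gt (Real.exp_pos (cc*x))), mul_one] at h4
    nlinarith [Real.rpow_pos_of_pos hc p, mul_le_mul_of_nonneg_right h4 (Real.rpow_pos_of_pos hc p).le]
  exact key.trans (le_max_right _ _)

lemma key_bound (κ q s : ℝ) (hκ : 0 < κ) (hq : 1 ≤ q) (hs : 0 ≤ s) :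
    ∃ C : ℝ, 1 ≤ C ∧ ∀ m t : ℝ, 1 ≤ m → 0 ≤ t →
      Real.exp (-(κ * t / m ^ q)) * (1+t) ^ (s/q) ≤ C * (1+m) ^ s := by
  obtain ⟨C0, hC0, hC⟩ := rpow_mul_exp_le (s/q) (κ/2) (by positivity) (by positivity)
  refine ⟨C0, hC0, fun m t hm ht => ?_⟩
  have hq0 : 0 < q := by linarith
  have hm0 : (0:ℝ) < m := by linarith
  have h1m : (2:ℝ) ≤ 1 + m := by linarith
  have hmpos : (0:ℝ) < 1 + m := by linarith
  have hmq0 : 0 < m ^ q := Real.rpow_pos_of_pos hm0 q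
  have h1ms : (0:ℝ) ≤ (1+m)^s := (Real.rpow_pos_of_pos hmpos s).le
  rcases le_or_gt (1 + t) ((1+m)^q) with hcase | hcase
  · have e1 : Real.exp (-(κ*t/m^q)) ≤ 1 := by
      rw [← Real.exp_zero]
      apply Real.exp_le_exp.mpr
      have : 0 ≤ κ*t/m^q := by positivity
      linarith
    have e2 : (1+t)^(s/q) ≤ ((1+m)^q)^(s/q) :=
      Real.rpow_le_rpow (by linarith) hcase (by positivity)
    have e3 : ((1+m)^q)^(s/q) = (1+m)^s := by
      rw [← Real.rpow_mul hmpos.le]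
      congr 1
      field_simp
    have e4 : (0:ℝ) ≤ (1+t)^(s/q) := Real.rpow_nonneg (by linarith) _
    calc Real.exp (-(κ*t/m^q)) * (1+t)^(s/q) ≤ 1 * ((1+m)^s) := by
          rw [e3] at e2
          exact mul_le_mul e1 e2 e4 zero_le_one
      _ ≤ C0 * (1+m)^s := by nlinarith
  · have hm2 : (2:ℝ) ≤ (1+m)^q := by
      have := Real.rpow_le_rpow_of_exponent_le (by linarith : (1:ℝ) ≤ 1+m) hq
      rw [Real.rpow_one] at this
      linarith
    have ht1 : (1:ℝ) ≤ t := by linarith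
    set x := (1+t)/m^q with hx
    have hx0 : 0 ≤ x := by positivity
    have harg : (κ/2) * x ≤ κ*t/m^q := by
      rw [hx, show κ/2 * ((1 + t) / m ^ q) = (κ/2*(1+t)) / m ^ q by ring,
        div_le_div_iff₀ hmq0 hmq0]
      exact mul_le_mul_of_nonneg_right (by nlinarith : κ/2*(1+t) ≤ κ*t) hmq0.le
    have e1 : Real.exp (-(κ*t/m^q)) ≤ Real.exp (-((κ/2)*x)) := by
      apply Real.exp_le_exp.mpr; linarith
    have e2 : (1+t)^(s/q) = x^(s/q) * (m^q)^(s/q) := by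
      rw [hx, Real.div_rpow (by linarith) hmq0.le]
      field_simp
    have e3 : (m^q)^(s/q) = m^s := by
      rw [← Real.rpow_mul hm0.le]
      congr 1
      field_simp
    have e4 : m^s ≤ (1+m)^s := Real.rpow_le_rpow hm0.le (by linarith) hs
    have e5 := hC x hx0
    have hms : (0:ℝ) ≤ m^s := (Real.rpow_pos_of_pos hm0 s).le
    calc Real.exp (-(κ*t/m^q)) * (1+t)^(s/q)
        = Real.exp (-(κ*t/m^q)) * (x^(s/q) * m^s) := by rw [e2, e3]
      _ ≤ Real.exp (-((κ/2)*x)) * (x^(s/q) * m^s) := by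
          apply mul_le_mul_of_nonneg_right e1
          positivity
      _ = (x^(s/q) * Real.exp (-((κ/2)*x))) * m^s := by ring
      _ ≤ C0 * m^s := mul_le_mul_of_nonneg_right e5 hms
      _ ≤ C0 * (1+m)^s := by nlinarith

set_option maxHeartbeats 2000000 in
theorem linear_stability_decay (n : ℕ) (bt : Fin n → ℝ) (c r s : ℝ)
    (hc : 0 < c) (hr : 0 < r) (hs : 0 ≤ s)
    (hD : ∀ (k : Fin n → ℤ), k ≠ 0 →
      c / (Real.sqrt (∑ i, ((k i : ℝ)) ^ 2)) ^ r ≤ |∑ i, bt i * (k i : ℝ)|) :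
    ∃ C > 0, ∀ (U B : (Fin n → ℤ) → ℝ → EuclideanSpace ℂ (Fin n)),
      (∀ (k : Fin n → ℤ) (t : ℝ), HasDerivAt (U k)
        ((Complex.I * ((∑ i, bt i * (k i : ℝ) : ℝ) : ℂ)) • B k t) t) →
      (∀ (k : Fin n → ℤ) (t : ℝ), HasDerivAt (B k)
        ((Complex.I * ((∑ i, bt i * (k i : ℝ) : ℝ) : ℂ)) • U k t
          - (((∑ i, ((k i : ℝ)) ^ 2 : ℝ)) : ℂ) • B k t) t) →
      (∀ k : Fin n → ℤ, ∑ i, (k i : ℂ) * U k 0 i = 0) →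
      (∀ k : Fin n → ℤ, ∑ i, (k i : ℂ) * B k 0 i = 0) →
      U (0 : Fin n → ℤ) 0 = 0 → B (0 : Fin n → ℤ) 0 = 0 →
      Summable (fun k : Fin n → ℤ =>
        (1 + ∑ i, ((k i : ℝ)) ^ 2) ^ s * ‖U k 0‖ ^ 2) →
      Summable (fun k : Fin n → ℤ =>
        (1 + ∑ i, ((k i : ℝ)) ^ 2) ^ s * ‖B k 0‖ ^ 2) →
      ∀ t : ℝ, 0 ≤ t →
        Real.sqrt (∑' k : Fin n → ℤ, ‖U k t‖ ^ 2)
          + Real.sqrt (∑' k : Fin n → ℤ, ‖B k t‖ ^ 2) ≤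
        C * (1 + t) ^ (-(s / (2 * (1 + r)))) *
          (Real.sqrt (∑' k : Fin n → ℤ, (1 + ∑ i, ((k i : ℝ)) ^ 2) ^ s * ‖U k 0‖ ^ 2)
            + Real.sqrt (∑' k : Fin n → ℤ, (1 + ∑ i, ((k i : ℝ)) ^ 2) ^ s * ‖B k 0‖ ^ 2)) := by
  classical
  set T : ℝ := 1 + ∑ i, (bt i)^2 with hTdef
  have hT : 1 ≤ T := by
    have : 0 ≤ ∑ i, (bt i)^2 := Finset.sum_nonneg fun i _ => sq_nonneg _
    simp only [hTdef]; linarith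
  have hT0 : (0:ℝ) < T := by linarith
  set κ : ℝ := c^2/(3*T) with hκdef
  have hκ : 0 < κ := by positivity
  obtain ⟨C₂, hC₂1, hC₂⟩ := key_bound κ (1+r) s hκ (by linarith) hs
  have hC₂0 : (0:ℝ) < C₂ := by linarith
  refine ⟨2 * Real.sqrt (3*C₂), by positivity, ?_⟩
  intro U B hU hB _ _ hU0 hB0 hSU hSB t ht
  have h1t : (0:ℝ) < 1 + t := by linarith
  set p : ℝ := s/(1+r) with hpdef
  have hDp : (0:ℝ) < (1+t)^(-p) := Real.rpow_pos_of_pos h1t _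
  -- per-mode estimate
  have hmode : ∀ k : Fin n → ℤ, ‖U k t‖^2 + ‖B k t‖^2 ≤
      3*C₂*(1+t)^(-p) * ((1 + ∑ i, ((k i : ℝ))^2)^s * ‖U k 0‖^2
        + (1 + ∑ i, ((k i : ℝ))^2)^s * ‖B k 0‖^2) := by
    intro k
    by_cases hk : k = 0
    · -- zero mode: constant zero
      subst hk
      have hsum0 : (∑ i, bt i * (((0 : Fin n → ℤ) i : ℝ))) = 0 := by simp
      have hsq0 : (∑ i, (((0 : Fin n → ℤ) i : ℝ))^2) = 0 := by simp
      have hUz : ∀ τ, HasDerivAt (U 0) 0 τ := by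
        intro τ; have h := hU 0 τ; rw [hsum0] at h; simpa using h
      have hBz : ∀ τ, HasDerivAt (B 0) 0 τ := by
        intro τ; have h := hB 0 τ; rw [hsum0, hsq0] at h; simpa using h
      have hfdU : ∀ x, fderiv ℝ (U 0) x = 0 := fun x => by
        rw [(hUz x).hasFDerivAt.fderiv]; ext v; simp
      have hfdB : ∀ x, fderiv ℝ (B 0) x = 0 := fun x => by
        rw [(hBz x).hasFDerivAt.fderiv]; ext v; simp
      have hUt : U 0 t = 0 := by
        rw [is_const_of_fderiv_eq_zero (𝕜 := ℝ)
          (fun x => (hUz x).differentiableAt) hfdU t 0, hU0]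
      have hBt : B 0 t = 0 := by
        rw [is_const_of_fderiv_eq_zero (𝕜 := ℝ)
          (fun x => (hBz x).differentiableAt) hfdB t 0, hB0]
      rw [hUt, hBt]
      have hrhs : (0:ℝ) ≤ 3*C₂*(1+t)^(-p) * ((1 + ∑ i, (((0:Fin n → ℤ) i : ℝ))^2)^s * ‖U 0 0‖^2
          + (1 + ∑ i, (((0:Fin n → ℤ) i : ℝ))^2)^s * ‖B 0 0‖^2) := by positivity
      simpa using hrhs
    · -- nonzero mode
      set m : ℝ := ∑ i, ((k i : ℝ))^2 with hmdef
      set a : ℝ := ∑ i, bt i * (k i : ℝ) with hadef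
      have hm1 : 1 ≤ m := by
        obtain ⟨i₀, hi₀⟩ : ∃ i, k i ≠ 0 := by
          by_contra h
          push_neg at h
          exact hk (funext h)
        have h1 : (1:ℤ) ≤ (k i₀)^2 := by
          rcases lt_or_gt_of_ne hi₀ with h | h <;> nlinarith
        have h2 : (1:ℝ) ≤ ((k i₀ : ℝ))^2 := by exact_mod_cast h1
        calc (1:ℝ) ≤ ((k i₀:ℝ))^2 := h2
          _ ≤ m := Finset.single_le_sum (f := fun i => ((k i:ℝ))^2)
              (fun i _ => sq_nonneg _) (Finset.mem_univ i₀)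
      have hm0 : (0:ℝ) < m := by linarith
      have haT : a^2 ≤ T*m := by
        have hcs := Finset.sum_mul_sq_le_sq_mul_sq Finset.univ bt (fun i => (k i : ℝ))
        have : (∑ i, (bt i)^2) * m ≤ T * m := by
          apply mul_le_mul_of_nonneg_right _ hm0.le
          simp only [hTdef]; linarith
        calc a^2 ≤ (∑ i, (bt i)^2) * m := hcs
          _ ≤ T*m := this
      -- mode decay
      have hdec := mode_decay a m T hm1 hT haT (U k) (B k) (hU k) (hB k) ht
      -- Diophantine lower bound on a²
      have hdio := hD k hk
      have hmr0 : (0:ℝ) < m^r := Real.rpow_pos_of_pos hm0 r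
      have hsqr : ((Real.sqrt m)^r)^2 = m^r := by
        rw [← Real.rpow_div_two_eq_sqrt r hm0.le, ← Real.rpow_natCast (m ^ (r/2)) 2,
          ← Real.rpow_mul hm0.le]
        norm_num
      have ha2 : c^2/m^r ≤ a^2 := by
        have hnn : 0 ≤ c / (Real.sqrt m)^r := by positivity
        have := pow_le_pow_left₀ hnn hdio 2
        rw [div_pow, hsqr, _root_.sq_abs] at this
        exact this
      -- compare exponents
      have hm1r : m^(1+r) = m * m^r := by
        rw [Real.rpow_add hm0, Real.rpow_one]
      have hm1r0 : (0:ℝ) < m^(1+r) := Real.rpow_pos_of_pos hm0 _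
      have hγcmp : κ / m^(1+r) ≤ a^2/(3*m*T) := by
        rw [div_le_div_iff₀ hm1r0 (by positivity)]
        have h2 : c^2 ≤ a^2 * m^r := by
          rwa [div_le_iff₀ hmr0] at ha2
        calc κ * (3*m*T) = c^2 * m := by
              rw [hκdef]; field_simp
          _ ≤ (a^2 * m^r) * m := mul_le_mul_of_nonneg_right h2 hm0.le
          _ = a^2 * m^(1+r) := by rw [hm1r]; ring
      have hexp1 : Real.exp (-(a^2/(3*m*T)) * t) ≤ Real.exp (-(κ*t/m^(1+r))) := by
        apply Real.exp_le_exp.mpr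
        have := mul_le_mul_of_nonneg_right hγcmp ht
        have heq1 : κ / m^(1+r) * t = κ*t/m^(1+r) := by ring
        nlinarith [this]
      have hkb := hC₂ m t hm1 ht
      have hexp2 : Real.exp (-(κ*t/m^(1+r))) ≤ C₂ * (1+m)^s * (1+t)^(-p) := by
        rw [Real.rpow_neg h1t.le, ← div_eq_mul_inv, le_div_iff₀ (Real.rpow_pos_of_pos h1t _)]
        exact hkb
      have hE0 : (0:ℝ) ≤ ‖U k 0‖^2 + ‖B k 0‖^2 := by positivity
      calc ‖U k t‖^2 + ‖B k t‖^2
          ≤ 3 * Real.exp (-(a^2/(3*m*T)) * t) * (‖U k 0‖^2 + ‖B k 0‖^2) := hdec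
        _ ≤ 3 * (C₂ * (1+m)^s * (1+t)^(-p)) * (‖U k 0‖^2 + ‖B k 0‖^2) := by
            apply mul_le_mul_of_nonneg_right _ hE0
            have := hexp1.trans hexp2
            linarith
        _ = 3*C₂*(1+t)^(-p) * ((1+m)^s * ‖U k 0‖^2 + (1+m)^s * ‖B k 0‖^2) := by ring
  -- summability
  have hSUB : Summable (fun k : Fin n → ℤ =>
      (1 + ∑ i, ((k i : ℝ))^2)^s * ‖U k 0‖^2 + (1 + ∑ i, ((k i : ℝ))^2)^s * ‖B k 0‖^2) :=
    hSU.add hSB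
  have hRHSsum : Summable (fun k : Fin n → ℤ => 3*C₂*(1+t)^(-p) *
      ((1 + ∑ i, ((k i : ℝ))^2)^s * ‖U k 0‖^2 + (1 + ∑ i, ((k i : ℝ))^2)^s * ‖B k 0‖^2)) :=
    hSUB.mul_left _
  have hsumUt : Summable (fun k : Fin n → ℤ => ‖U k t‖^2) := by
    apply Summable.of_nonneg_of_le (fun k => by positivity) _ hRHSsum
    intro k
    have := hmode k
    nlinarith [sq_nonneg ‖B k t‖]
  have hsumBt : Summable (fun k : Fin n → ℤ => ‖B k t‖^2) := by
    apply Summable.of_nonneg_of_le (fun k => by positivity) _ hRHSsum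
    intro k
    have := hmode k
    nlinarith [sq_nonneg ‖U k t‖]
  set HU : ℝ := ∑' k : Fin n → ℤ, (1 + ∑ i, ((k i : ℝ))^2)^s * ‖U k 0‖^2 with hHU
  set HB : ℝ := ∑' k : Fin n → ℤ, (1 + ∑ i, ((k i : ℝ))^2)^s * ‖B k 0‖^2 with hHB
  have hHU0 : 0 ≤ HU := tsum_nonneg fun k => by positivity
  have hHB0 : 0 ≤ HB := tsum_nonneg fun k => by positivity
  have htsum : ∀ (V : (Fin n → ℤ) → ℝ → EuclideanSpace ℂ (Fin n)),
      (∀ k, ‖V k t‖^2 ≤ 3*C₂*(1+t)^(-p) *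
        ((1 + ∑ i, ((k i : ℝ))^2)^s * ‖U k 0‖^2 + (1 + ∑ i, ((k i : ℝ))^2)^s * ‖B k 0‖^2)) →
      Summable (fun k : Fin n → ℤ => ‖V k t‖^2) →
      (∑' k : Fin n → ℤ, ‖V k t‖^2) ≤ 3*C₂*(1+t)^(-p) * (HU + HB) := by
    intro V hbd hsum
    calc (∑' k : Fin n → ℤ, ‖V k t‖^2)
        ≤ ∑' k : Fin n → ℤ, 3*C₂*(1+t)^(-p) *
            ((1 + ∑ i, ((k i : ℝ))^2)^s * ‖U k 0‖^2 + (1 + ∑ i, ((k i : ℝ))^2)^s * ‖B k 0‖^2) :=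
          Summable.tsum_le_tsum hbd hsum hRHSsum
      _ = 3*C₂*(1+t)^(-p) * (HU + HB) := by
          rw [tsum_mul_left, Summable.tsum_add hSU hSB]
  have htsumU : (∑' k : Fin n → ℤ, ‖U k t‖^2) ≤ 3*C₂*(1+t)^(-p) * (HU + HB) := by
    apply htsum U _ hsumUt
    intro k
    have := hmode k
    nlinarith [sq_nonneg ‖B k t‖]
  have htsumB : (∑' k : Fin n → ℤ, ‖B k t‖^2) ≤ 3*C₂*(1+t)^(-p) * (HU + HB) := by
    apply htsum B _ hsumBt
    intro k
    have := hmode k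
    nlinarith [sq_nonneg ‖U k t‖]
  -- take square roots
  have hsqrt_split : Real.sqrt (3*C₂*(1+t)^(-p) * (HU + HB))
      ≤ Real.sqrt (3*C₂) * (1+t)^(-(s / (2 * (1 + r)))) * (Real.sqrt HU + Real.sqrt HB) := by
    have h1 : Real.sqrt (3*C₂*(1+t)^(-p) * (HU + HB))
        = Real.sqrt (3*C₂) * Real.sqrt ((1+t)^(-p)) * Real.sqrt (HU + HB) := by
      rw [Real.sqrt_mul (by positivity), Real.sqrt_mul (by positivity)]
    have h2 : Real.sqrt ((1+t)^(-p)) = (1+t)^(-(s / (2 * (1 + r)))) := by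
      have hexp : (-p) * (1/2) = -(s / (2*(1+r))) := by
        have h1r : (1+r) ≠ 0 := by positivity
        rw [hpdef]
        field_simp
      rw [Real.sqrt_eq_rpow, ← Real.rpow_mul h1t.le, hexp]
    have h3 : Real.sqrt (HU + HB) ≤ Real.sqrt HU + Real.sqrt HB := by
      have hsq : HU + HB ≤ (Real.sqrt HU + Real.sqrt HB)^2 := by
        nlinarith [Real.sq_sqrt hHU0, Real.sq_sqrt hHB0,
          mul_nonneg (Real.sqrt_nonneg HU) (Real.sqrt_nonneg HB)]
      have := Real.sqrt_le_sqrt hsq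
      rwa [Real.sqrt_sq (by positivity)] at this
    rw [h1, h2]
    apply mul_le_mul_of_nonneg_left h3 (by positivity)
  have hfinU : Real.sqrt (∑' k : Fin n → ℤ, ‖U k t‖^2)
      ≤ Real.sqrt (3*C₂) * (1+t)^(-(s / (2 * (1 + r)))) * (Real.sqrt HU + Real.sqrt HB) :=
    (Real.sqrt_le_sqrt htsumU).trans hsqrt_split
  have hfinB : Real.sqrt (∑' k : Fin n → ℤ, ‖B k t‖^2)
      ≤ Real.sqrt (3*C₂) * (1+t)^(-(s / (2 * (1 + r)))) * (Real.sqrt HU + Real.sqrt HB) :=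
    (Real.sqrt_le_sqrt htsumB).trans hsqrt_split
  calc Real.sqrt (∑' k : Fin n → ℤ, ‖U k t‖^2) + Real.sqrt (∑' k : Fin n → ℤ, ‖B k t‖^2)
      ≤ 2 * (Real.sqrt (3*C₂) * (1+t)^(-(s / (2 * (1 + r)))) * (Real.sqrt HU + Real.sqrt HB)) := by
        linarith
    _ = 2 * Real.sqrt (3*C₂) * (1+t)^(-(s / (2 * (1 + r)))) * (Real.sqrt HU + Real.sqrt HB) := by
        ring
end

section
/- Let $u$ be a mean-zero function on $\mathbb{T}^n$, and let $A, M > 0$ with $A/M \le 1$, and exponents $s \ge 0$, $r > 0$, $m \ge s/2 + 1$. Then $\frac{A}{M}\|\Lambda^{s/2+1}u\|_{L^2}^2 - \|\Lambda^{s/2 - r}u\|_{L^2}^2 \le \Big(\frac{A}{M}\Big)^{1 + \frac{m - s/2 - 1}{1+r}} \|\Lambda^m u\|_{L^2}^2$. -/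
theorem frequency_splitting_inequality (n : ℕ) (A M s r m : ℝ)
    (hA : 0 < A) (hM : 0 < M) (hAM : A / M ≤ 1)
    (hs : 0 ≤ s) (hr : 0 < r) (hm : s / 2 + 1 ≤ m)
    (a : (Fin n → ℤ) → ℂ) (ha0 : a 0 = 0)
    (h1 : Summable (fun k : Fin n → ℤ =>
      (Real.sqrt (∑ i, ((k i : ℝ)) ^ 2)) ^ (s + 2) * ‖a k‖ ^ 2))
    (h2 : Summable (fun k : Fin n → ℤ =>
      (Real.sqrt (∑ i, ((k i : ℝ)) ^ 2)) ^ (s - 2 * r) * ‖a k‖ ^ 2))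
    (h3 : Summable (fun k : Fin n → ℤ =>
      (Real.sqrt (∑ i, ((k i : ℝ)) ^ 2)) ^ (2 * m) * ‖a k‖ ^ 2)) :
    A / M * (∑' k : Fin n → ℤ, (Real.sqrt (∑ i, ((k i : ℝ)) ^ 2)) ^ (s + 2) * ‖a k‖ ^ 2)
      - (∑' k : Fin n → ℤ, (Real.sqrt (∑ i, ((k i : ℝ)) ^ 2)) ^ (s - 2 * r) * ‖a k‖ ^ 2)
    ≤ (A / M) ^ (1 + (m - s / 2 - 1) / (1 + r)) *
        ∑' k : Fin n → ℤ, (Real.sqrt (∑ i, ((k i : ℝ)) ^ 2)) ^ (2 * m) * ‖a k‖ ^ 2 := by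
  set ε : ℝ := A / M with hεdef
  have hε0 : 0 < ε := div_pos hA hM
  set θ : ℝ := (m - s / 2 - 1) / (1 + r) with hθdef
  have hθ0 : 0 ≤ θ := div_nonneg (by linarith) (by linarith)
  set ρ : (Fin n → ℤ) → ℝ := fun k => Real.sqrt (∑ i, ((k i : ℝ)) ^ 2) with hρdef
  have hρ0 : ∀ k, 0 ≤ ρ k := fun k => Real.sqrt_nonneg _
  have key : ∀ k, ε * (ρ k ^ (s + 2) * ‖a k‖ ^ 2) - ρ k ^ (s - 2 * r) * ‖a k‖ ^ 2
      ≤ ε ^ (1 + θ) * (ρ k ^ (2 * m) * ‖a k‖ ^ 2) := by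
    intro k
    by_cases hk : k = 0
    · simp [hk, ha0]
    · have h1k : 1 ≤ ρ k := by
        rw [hρdef]
        rw [show (1:ℝ) = Real.sqrt 1 by simp]
        apply Real.sqrt_le_sqrt
        obtain ⟨i, hi⟩ : ∃ i, k i ≠ 0 := by
          by_contra h
          push_neg at h
          exact hk (funext h)
        have h1 : (1:ℝ) ≤ ((k i : ℝ)) ^ 2 := by
          have : (1:ℤ) ≤ |k i| := Int.one_le_abs hi
          have : (1:ℝ) ≤ |(k i : ℝ)| := by exact_mod_cast this
          nlinarith [sq_abs ((k i : ℝ)), abs_nonneg ((k i : ℝ))]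
        calc (1:ℝ) ≤ ((k i : ℝ)) ^ 2 := h1
          _ ≤ ∑ j, ((k j : ℝ)) ^ 2 :=
            Finset.single_le_sum (f := fun j => ((k j : ℝ)) ^ 2) (fun j _ => sq_nonneg _) (Finset.mem_univ i)
      have hρpos : 0 < ρ k := lt_of_lt_of_le one_pos h1k
      have coeff : ε * ρ k ^ (s + 2) - ρ k ^ (s - 2 * r)
          ≤ ε ^ (1 + θ) * ρ k ^ (2 * m) := by
        by_cases hc : ε ≤ ρ k ^ (-(2 * r + 2))
        · have hle : ε * ρ k ^ (s + 2) ≤ ρ k ^ (s - 2 * r) := by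
            calc ε * ρ k ^ (s + 2) ≤ ρ k ^ (-(2 * r + 2)) * ρ k ^ (s + 2) := by
                  apply mul_le_mul_of_nonneg_right hc (Real.rpow_nonneg (hρ0 k) _)
              _ = ρ k ^ (s - 2 * r) := by
                  rw [← Real.rpow_add hρpos]; ring_nf
          have hrhs : 0 ≤ ε ^ (1 + θ) * ρ k ^ (2 * m) :=
            mul_nonneg (Real.rpow_nonneg hε0.le _) (Real.rpow_nonneg (hρ0 k) _)
          linarith
        · push_neg at hc
          have hG : 0 ≤ ρ k ^ (s - 2 * r) := Real.rpow_nonneg (hρ0 k) _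
          have hmain : ε * ρ k ^ (s + 2) ≤ ε ^ (1 + θ) * ρ k ^ (2 * m) := by
            have hεθ : ρ k ^ (s + 2 - 2 * m) ≤ ε ^ θ := by
              have : ρ k ^ (s + 2 - 2 * m) = (ρ k ^ (-(2 * r + 2))) ^ θ := by
                rw [← Real.rpow_mul (hρ0 k)]
                congr 1
                rw [hθdef, div_eq_mul_inv]
                have hinv : (1 + r) * (1 + r)⁻¹ = 1 := mul_inv_cancel₀ (by linarith)
                linear_combination (2 * m - s - 2) * hinv
              rw [this]
              exact Real.rpow_le_rpow (Real.rpow_nonneg (hρ0 k) _) hc.le hθ0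
            have hsplit : ρ k ^ (s + 2) = ρ k ^ (2 * m) * ρ k ^ (s + 2 - 2 * m) := by
              rw [← Real.rpow_add hρpos]; ring_nf
            have hε1θ : ε ^ (1 + θ) = ε * ε ^ θ := by
              rw [Real.rpow_add hε0, Real.rpow_one]
            rw [hsplit, hε1θ]
            have hρm : 0 ≤ ρ k ^ (2 * m) := Real.rpow_nonneg (hρ0 k) _
            calc ε * (ρ k ^ (2 * m) * ρ k ^ (s + 2 - 2 * m))
                ≤ ε * (ρ k ^ (2 * m) * ε ^ θ) := by
                  apply mul_le_mul_of_nonneg_left _ hε0.le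
                  exact mul_le_mul_of_nonneg_left hεθ hρm
              _ = ε * ε ^ θ * ρ k ^ (2 * m) := by ring
          linarith
      have ha2 : 0 ≤ ‖a k‖ ^ 2 := sq_nonneg _
      calc ε * (ρ k ^ (s + 2) * ‖a k‖ ^ 2) - ρ k ^ (s - 2 * r) * ‖a k‖ ^ 2
          = (ε * ρ k ^ (s + 2) - ρ k ^ (s - 2 * r)) * ‖a k‖ ^ 2 := by ring
        _ ≤ (ε ^ (1 + θ) * ρ k ^ (2 * m)) * ‖a k‖ ^ 2 :=
            mul_le_mul_of_nonneg_right coeff ha2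
        _ = ε ^ (1 + θ) * (ρ k ^ (2 * m) * ‖a k‖ ^ 2) := by ring
  have hs1 : Summable (fun k => ε * (ρ k ^ (s + 2) * ‖a k‖ ^ 2)) := h1.mul_left ε
  have hs3 : Summable (fun k => ε ^ (1 + θ) * (ρ k ^ (2 * m) * ‖a k‖ ^ 2)) :=
    h3.mul_left _
  calc ε * (∑' k, ρ k ^ (s + 2) * ‖a k‖ ^ 2) - ∑' k, ρ k ^ (s - 2 * r) * ‖a k‖ ^ 2
      = ∑' k, (ε * (ρ k ^ (s + 2) * ‖a k‖ ^ 2) - ρ k ^ (s - 2 * r) * ‖a k‖ ^ 2) := by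
        rw [Summable.tsum_sub hs1 h2, tsum_mul_left]
    _ ≤ ∑' k, ε ^ (1 + θ) * (ρ k ^ (2 * m) * ‖a k‖ ^ 2) :=
        Summable.tsum_le_tsum key (hs1.sub h2) hs3
    _ = ε ^ (1 + θ) * ∑' k, ρ k ^ (2 * m) * ‖a k‖ ^ 2 := tsum_mul_left
end
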